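/- Let X be a Banach space and (X_k) a sequence of closed subspaces. Define D_c as the space of sequences ξ = (x_1, x_2, ...) with x_k ∈ X_k such that the series Σ x_k converges in X, equipped with the norm ‖ξ‖ = sup_{k≥1} ‖x_1 + ... + x_k‖. Then D_c is a Banach space. -/

import Mathlib

open Filter Finset

/-- `f` is a member of `D_c`: each term lies in the corresponding subspace and the
series `Σ f k` converges in `X`. -/
def MemDc {E : Type*} [NormedAddCommGroup E] [NormedSpace ℝ E]
    (X : ℕ → Submodule ℝ E) (f : ℕ → E) : Prop :=
  (∀ k, f k ∈ X k) ∧ ∃ x : E, Tendsto (fun n => ∑ k ∈ Finset.range n, f k) atTop (nhds x)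

/-- The norm on `D_c`: the supremum of the norms of the partial sums. -/
noncomputable def DcNorm {E : Type*} [NormedAddCommGroup E] (f : ℕ → E) : ℝ :=
  ⨆ n : ℕ, ‖∑ k ∈ Finset.range (n + 1), f k‖

/-- `D_c` is a Banach space: every Cauchy sequence (with respect to the norm `DcNorm`)
of elements of `D_c` converges in `D_c`. -/
theorem Dc_complete {E : Type*} [NormedAddCommGroup E] [NormedSpace ℝ E] [CompleteSpace E]
    (X : ℕ → Submodule ℝ E) (hX : ∀ k, IsClosed (X k : Set E))
    (F : ℕ → ℕ → E) (hF : ∀ n, MemDc X (F n))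
    (hcauchy : ∀ ε : ℝ, 0 < ε → ∃ N, ∀ m ≥ N, ∀ n ≥ N,
      DcNorm (fun k => F m k - F n k) ≤ ε) :
    ∃ f : ℕ → E, MemDc X f ∧
      ∀ ε : ℝ, 0 < ε → ∃ N, ∀ n ≥ N, DcNorm (fun k => F n k - f k) ≤ ε := by
  set S : ℕ → ℕ → E := fun n m => ∑ k ∈ Finset.range (m + 1), F n k with hS
  -- each S n converges as m → ∞
  have hSconv : ∀ n, ∃ x : E, Tendsto (fun m => S n m) atTop (nhds x) := by
    intro n
    obtain ⟨x, hx⟩ := (hF n).2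
    exact ⟨x, hx.comp (tendsto_add_atTop_nat 1)⟩
  -- boundedness
  have hbound : ∀ n, ∃ C : ℝ, ∀ m, ‖S n m‖ ≤ C := by
    intro n
    obtain ⟨x, hx⟩ := hSconv n
    obtain ⟨C, hC⟩ := hx.norm.bddAbove_range
    exact ⟨C, fun m => hC ⟨m, rfl⟩⟩
  have hsumsub : ∀ a b m, ∑ k ∈ Finset.range (m + 1), (F a k - F b k) = S a m - S b m := by
    intro a b m
    simp [hS, Finset.sum_sub_distrib]
  have hbdd : ∀ a b, BddAbove (Set.range fun m => ‖∑ k ∈ Finset.range (m + 1),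
      (F a k - F b k)‖) := by
    intro a b
    obtain ⟨Ca, hCa⟩ := hbound a
    obtain ⟨Cb, hCb⟩ := hbound b
    refine ⟨Ca + Cb, ?_⟩
    rintro y ⟨m, rfl⟩
    dsimp only
    rw [hsumsub]
    exact (norm_sub_le _ _).trans (add_le_add (hCa m) (hCb m))
  have hpt : ∀ a b m, ‖S a m - S b m‖ ≤ DcNorm (fun k => F a k - F b k) := by
    intro a b m
    rw [← hsumsub, DcNorm]
    exact le_ciSup (hbdd a b) m
  -- for each m, (fun n => S n m) is Cauchy in E, take limit T m
  have hT : ∀ m, ∃ y : E, Tendsto (fun n => S n m) atTop (nhds y) := by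
    intro m
    apply cauchySeq_tendsto_of_complete
    rw [Metric.cauchySeq_iff]
    intro ε hε
    obtain ⟨N, hN⟩ := hcauchy (ε / 2) (by linarith)
    refine ⟨N, fun a ha b hb => ?_⟩
    rw [dist_eq_norm]
    exact lt_of_le_of_lt ((hpt a b m).trans (hN a ha b hb)) (by linarith)
  choose T hTlim using hT
  -- the candidate limit sequence
  set f : ℕ → E := fun k => if k = 0 then T 0 else T k - T (k - 1) with hf
  have hsum : ∀ m, ∑ k ∈ Finset.range (m + 1), f k = T m := by
    intro m
    induction m with
    | zero => simp [hf]
    | succ j ih =>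
        rw [Finset.sum_range_succ, ih]
        simp [hf]
  -- ‖T k - S n k‖ bounds from the Cauchy hypothesis
  have hkey : ∀ ε : ℝ, 0 < ε → ∃ N, ∀ n ≥ N, ∀ m, ‖S n m - T m‖ ≤ ε := by
    intro ε hε
    obtain ⟨N, hN⟩ := hcauchy ε hε
    refine ⟨N, fun n hn m => ?_⟩
    have h1 : Tendsto (fun a => ‖S n m - S a m‖) atTop (nhds ‖S n m - T m‖) :=
      ((tendsto_const_nhds.sub (hTlim m)).norm)
    refine le_of_tendsto h1 ?_
    filter_upwards [eventually_ge_atTop N] with a ha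
    exact (hpt n a m).trans (hN n hn a ha)
  -- membership in the subspaces
  have hmem : ∀ k, f k ∈ X k := by
    intro k
    match k with
    | 0 =>
        have : f 0 = T 0 := by simp [hf]
        rw [this]
        have hS0 : ∀ n, S n 0 = F n 0 := by intro n; simp [hS]
        refine (hX 0).mem_of_tendsto (hTlim 0) ?_
        filter_upwards with n
        rw [hS0 n]
        exact (hF n).1 0
    | j + 1 =>
        have hfj : f (j + 1) = T (j + 1) - T j := by simp [hf]
        rw [hfj]
        have hFd : ∀ n, S n (j + 1) - S n j = F n (j + 1) := by
          intro n
          simp [hS, Finset.sum_range_succ]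
        refine (hX (j + 1)).mem_of_tendsto ((hTlim (j + 1)).sub (hTlim j)) ?_
        filter_upwards with n
        rw [hFd n]
        exact (hF n).1 (j + 1)
  -- T is Cauchy hence converges
  have hTcauchy : CauchySeq T := by
    rw [Metric.cauchySeq_iff]
    intro ε hε
    obtain ⟨N, hN⟩ := hkey (ε / 4) (by linarith)
    obtain ⟨x, hx⟩ := hSconv N
    have : CauchySeq (fun m => S N m) := hx.cauchySeq
    rw [Metric.cauchySeq_iff] at this
    obtain ⟨M, hM⟩ := this (ε / 4) (by linarith)
    refine ⟨M, fun a ha b hb => ?_⟩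
    have h1 := hN N le_rfl a
    have h2 := hN N le_rfl b
    have h3 := hM a ha b hb
    rw [dist_eq_norm] at h3 ⊢
    have : T a - T b = -(S N a - T a) + (S N a - S N b) + (S N b - T b) := by abel
    rw [this]
    calc ‖-(S N a - T a) + (S N a - S N b) + (S N b - T b)‖
        ≤ ‖-(S N a - T a) + (S N a - S N b)‖ + ‖S N b - T b‖ := norm_add_le _ _
      _ ≤ ‖-(S N a - T a)‖ + ‖S N a - S N b‖ + ‖S N b - T b‖ :=
          add_le_add (norm_add_le _ _) le_rfl
      _ < ε := by rw [norm_neg]; linarith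
  obtain ⟨x, hx⟩ := cauchySeq_tendsto_of_complete hTcauchy
  refine ⟨f, ⟨hmem, ⟨x, ?_⟩⟩, ?_⟩
  · rw [← tendsto_add_atTop_iff_nat 1]
    have : (fun n => ∑ k ∈ Finset.range (n + 1), f k) = T := funext hsum
    rw [this]
    exact hx
  · intro ε hε
    obtain ⟨N, hN⟩ := hkey ε hε
    refine ⟨N, fun n hn => ?_⟩
    rw [DcNorm]
    refine ciSup_le fun m => ?_
    have : ∑ k ∈ Finset.range (m + 1), (F n k - f k) = S n m - T m := by
      rw [Finset.sum_sub_distrib, hsum]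
    rw [this]
    exact hN n hn m
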